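/- (Sectorial Maximum Principle) Let F be a family of linear functionals on ℝⁿ and let Σ_F = ∩_{ℓ∈F} { v ∈ ℝⁿ : ℓ(v) ≥ 0 } be the corresponding closed sector. If the initial velocities satisfy v_i(0) ∈ Σ_F for every i = 1,…,N, then v_i(t) ∈ Σ_F for every i and every t ≥ 0. -/

import Mathlib

open Filter Topology Finset Real

/-- Sectorial Maximum Principle: if all initial velocities lie in the closed sector
`Σ_F = ∩_{ℓ ∈ F} {v : ℓ(v) ≥ 0}` determined by a family `F` of linear functionals, then
the velocities remain in `Σ_F` for all times. -/
theorem sectorial_maximum_principle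
    {n N : ℕ}
    (m : Fin N → ℝ) (hm : ∀ j, 0 < m j)
    (φ : ℝ → ℝ) (hφc : Continuous φ)
    (hφpos : ∀ r, 0 ≤ r → 0 < φ r)
    (hφanti : AntitoneOn φ (Set.Ici 0))
    (hφbdd : ∃ Cφ : ℝ, ∀ r, 0 ≤ r → φ r ≤ Cφ)
    {σ p κ : ℝ} (hσ : 0 < σ) (hp : 0 < p) (hκ : 0 ≤ κ)
    (x v : Fin N → ℝ → EuclideanSpace ℝ (Fin (n + 1)))
    (θ : Fin N → ℝ → ℝ)
    (hθpos : ∀ i t, 0 ≤ t → 0 < θ i t)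
    (hx : ∀ i t, 0 ≤ t → HasDerivAt (x i) (v i t) t)
    (hv : ∀ i t, 0 ≤ t → HasDerivAt (v i)
      ((∑ j, (m j * φ ‖x i t - x j t‖) • (v j t - v i t))
        + (σ * (θ i t - ‖v i t‖ ^ p)) • v i t) t)
    (hθode : ∀ i t, 0 ≤ t → HasDerivAt (θ i)
      (κ * ∑ j, m j * φ ‖x i t - x j t‖ * (θ j t - θ i t)) t)
    (F : Set (EuclideanSpace ℝ (Fin (n + 1)) →ₗ[ℝ] ℝ))
    (h0 : ∀ i, ∀ ℓ ∈ F, 0 ≤ ℓ (v i 0)) :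
    ∀ i, ∀ t, 0 ≤ t → ∀ ℓ ∈ F, 0 ≤ ℓ (v i t) := by
  intro i₀ T hT ℓ hℓ
  classical
  have hNe : Nonempty (Fin N) := ⟨i₀⟩
  set ℓ' : EuclideanSpace ℝ (Fin (n + 1)) →L[ℝ] ℝ := LinearMap.toContinuousLinearMap ℓ with hℓ'def
  set u : Fin N → ℝ → ℝ := fun i t => ℓ (v i t) with hu_def
  set c : Fin N → ℝ → ℝ := fun i t => σ * (θ i t - ‖v i t‖ ^ p) with hc_def
  -- derivative of u i
  have hu : ∀ i t, 0 ≤ t → HasDerivAt (u i)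
      ((∑ j, (m j * φ ‖x i t - x j t‖) * (u j t - u i t)) + c i t * u i t) t := by
    intro i t ht
    have h1 := (ℓ'.hasFDerivAt
      (x := v i t)).comp_hasDerivAt t (hv i t ht)
    have h2 : ⇑ℓ' ∘ v i = u i := rfl
    rw [h2] at h1
    refine h1.congr_deriv ?_
    simp only [map_add, map_sum, map_smul, map_sub, smul_eq_mul]
    rfl
  -- continuity facts
  have hucont : ∀ i t, 0 ≤ t → ContinuousAt (u i) t :=
    fun i t ht => (hu i t ht).continuousAt
  have hccont : ∀ i t, 0 ≤ t → ContinuousAt (c i) t := by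
    intro i t ht
    exact (continuousAt_const.mul (((hθode i t ht).continuousAt).sub
      (((hv i t ht).continuousAt.norm).rpow_const (Or.inr hp.le))))
  -- uniform bound on c on [0, T]
  obtain ⟨L, hL⟩ : ∃ L : ℝ, ∀ i, ∀ t ∈ Set.Icc (0 : ℝ) T, |c i t| ≤ L := by
    have hcont : ContinuousOn (fun t => ∑ i, |c i t|) (Set.Icc 0 T) := by
      intro t ht
      exact ContinuousAt.continuousWithinAt
        (tendsto_finset_sum _ fun i _ => (hccont i t ht.1).abs)
    obtain ⟨C, hC⟩ := isCompact_Icc.exists_bound_of_continuousOn hcont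
    refine ⟨C, fun i t ht => ?_⟩
    have h1 : |c i t| ≤ ∑ j, |c j t| :=
      Finset.single_le_sum (f := fun j => |c j t|) (fun j _ => abs_nonneg _) (Finset.mem_univ i)
    have h2 := hC t ht
    rw [Real.norm_eq_abs] at h2
    exact h1.trans ((le_abs_self _).trans h2)
  set K : ℝ := max L 0 with hK_def
  have hK0 : 0 ≤ K := le_max_right _ _
  -- the barrier function
  set f : ℝ → ℝ := fun t => Finset.univ.sup' Finset.univ_nonempty
    (fun i => max (-(u i t)) 0) with hf_def
  have hf_nonneg : ∀ t, 0 ≤ f t := fun t =>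
    le_trans (le_max_right (-(u i₀ t)) 0)
      (Finset.le_sup' (fun i => max (-(u i t)) 0) (Finset.mem_univ i₀))
  have h_le : ∀ i t, -(u i t) ≤ f t := fun i t =>
    le_trans (le_max_left (-(u i t)) 0)
      (Finset.le_sup' (fun i => max (-(u i t)) 0) (Finset.mem_univ i))
  have hfc : ContinuousOn f (Set.Icc 0 T) := by
    intro t ht
    exact ContinuousAt.continuousWithinAt
      (ContinuousAt.finset_sup'_apply _ fun i _ => ((hucont i t ht.1).neg).max continuousAt_const)
  have hf0 : f 0 ≤ 0 := by
    refine Finset.sup'_le _ _ fun i _ => ?_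
    exact max_le (neg_nonpos.2 (h0 i ℓ hℓ)) le_rfl
  -- Dini derivative estimate
  have hf' : ∀ s ∈ Set.Ico (0 : ℝ) T, ∀ r, K * f s < r →
      ∃ᶠ z in 𝓝[>] s, (z - s)⁻¹ * (f z - f s) < r := by
    intro s hs r hr
    have hs0 : (0 : ℝ) ≤ s := hs.1
    have hrpos : 0 < r := lt_of_le_of_lt (mul_nonneg hK0 (hf_nonneg s)) hr
    have hall : ∀ i : Fin N, ∀ᶠ z in 𝓝[>] s, max (-(u i z)) 0 < f s + (z - s) * r := by
      intro i
      have hpos : ∀ᶠ z in 𝓝[>] s, (0 : ℝ) < f s + (z - s) * r := by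
        filter_upwards [self_mem_nhdsWithin] with z hz
        have : 0 < (z - s) * r := mul_pos (sub_pos.2 hz) hrpos
        linarith [hf_nonneg s]
      rcases lt_or_eq_of_le (h_le i s) with hlt | heq
      · -- strict case: continuity
        have hcont : ContinuousAt (fun z => -(u i z)) s := (hucont i s hs0).neg
        have hev : ∀ᶠ z in 𝓝 s, -(u i z) < f s := hcont.eventually_lt continuousAt_const hlt
        filter_upwards [hpos, eventually_nhdsWithin_of_eventually_nhds hev,
          self_mem_nhdsWithin] with z hz1 hz2 hz3
        have : 0 < (z - s) * r := mul_pos (sub_pos.2 hz3) hrpos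
        exact max_lt (by linarith) hz1
      · -- equality case: use the ODE
        set d : ℝ := (∑ j, (m j * φ ‖x i s - x j s‖) * (u j s - u i s)) + c i s * u i s with hd
        have hdd : HasDerivAt (u i) d s := hu i s hs0
        have huis : u i s = -f s := by linarith [heq]
        have hdlb : -d ≤ K * f s := by
          have hsum : 0 ≤ ∑ j, (m j * φ ‖x i s - x j s‖) * (u j s - u i s) := by
            refine Finset.sum_nonneg fun j _ => mul_nonneg ?_ ?_
            · exact le_of_lt (mul_pos (hm j) (hφpos _ (norm_nonneg _)))
            · have := h_le j s; rw [huis]; linarith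
          have habs : |u i s| = f s := by
            rw [huis, abs_neg, abs_of_nonneg (hf_nonneg s)]
          have h1 : -(|c i s| * f s) ≤ c i s * u i s := by
            have hne := neg_abs_le (c i s * u i s)
            have he : |c i s * u i s| = |c i s| * f s := by
              rw [abs_mul (c i s) (u i s), habs]
            linarith
          have h2 : |c i s| * f s ≤ K * f s :=
            mul_le_mul_of_nonneg_right ((hL i s ⟨hs.1, hs.2.le⟩).trans (le_max_left _ _))
              (hf_nonneg s)
          have : -(K * f s) ≤ c i s * u i s := le_trans (by linarith) h1
          linarith
        have hslope : Tendsto (slope (u i) s) (𝓝[>] s) (𝓝 d) :=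
          (hasDerivAt_iff_tendsto_slope.mp hdd).mono_left
            (nhdsWithin_mono s fun z hz => ne_of_gt hz)
        have hev : ∀ᶠ z in 𝓝[>] s, -r < slope (u i) s z :=
          hslope.eventually (eventually_gt_nhds (by linarith))
        filter_upwards [hpos, hev, self_mem_nhdsWithin] with z hz1 hz2 hz3
        have hzs : 0 < z - s := sub_pos.2 hz3
        rw [slope_def_field] at hz2
        have h3 : -r * (z - s) < u i z - u i s := (lt_div_iff₀ hzs).mp hz2
        have h4 : -(u i z) < f s + (z - s) * r := by linarith
        exact max_lt h4 hz1
    have hev : ∀ᶠ z in 𝓝[>] s, f z - f s < (z - s) * r := by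
      filter_upwards [eventually_all.2 hall, self_mem_nhdsWithin] with z hz1 hz2
      have : f z < f s + (z - s) * r := (Finset.sup'_lt_iff _).2 fun i _ => hz1 i
      linarith
    refine Filter.Eventually.frequently ?_
    filter_upwards [hev, self_mem_nhdsWithin] with z hz1 hz2
    have hzs : 0 < z - s := sub_pos.2 hz2
    rw [inv_mul_lt_iff₀ hzs]
    exact hz1
  -- Gronwall
  have hg := le_gronwallBound_of_liminf_deriv_right_le (f' := fun s => K * f s)
    (δ := 0) (K := K) (ε := 0) hfc hf' hf0
    (fun s _ => le_of_eq (add_zero _).symm)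
  have hfT := hg T (Set.mem_Icc.2 ⟨hT, le_rfl⟩)
  rw [sub_zero, gronwallBound_ε0_δ0] at hfT
  have h1 := h_le i₀ T
  show 0 ≤ u i₀ T
  linarith
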